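/- (Łoś–Marczewski extension) Let μ be a finitely additive probability measure on an algebra 𝔄 of subsets of X and let Z ⊆ X. Define on the algebra 𝔄(Z) generated by 𝔄 ∪ {Z} the function μ̄((A ∩ Z) ∪ (B ∩ Zᶜ)) = μ*(A ∩ Z) + μ₊(B ∩ Zᶜ), where μ*(E) = inf{μ(A) : A ∈ 𝔄, A ⊇ E} and μ₊(E) = sup{μ(A) : A ∈ 𝔄, A ⊆ E}. Then μ̄ is a well-defined finitely additive probability measure on 𝔄(Z) extending μ. -/
import Mathlib


open Set

/-- `𝔄` is an algebra of subsets of `X`. -/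
def IsAlg {X : Type*} (𝔄 : Set (Set X)) : Prop :=
  ∅ ∈ 𝔄 ∧ (∀ A ∈ 𝔄, Aᶜ ∈ 𝔄) ∧ ∀ A ∈ 𝔄, ∀ B ∈ 𝔄, A ∪ B ∈ 𝔄

/-- `μ` is a finitely additive probability measure on the algebra `𝔄`. -/
def IsFAProb {X : Type*} (𝔄 : Set (Set X)) (μ : Set X → ℝ) : Prop :=
  μ univ = 1 ∧ (∀ A ∈ 𝔄, 0 ≤ μ A) ∧
    ∀ A ∈ 𝔄, ∀ B ∈ 𝔄, Disjoint A B → μ (A ∪ B) = μ A + μ B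

/-- The outer measure `μ*` induced by `μ` on `𝔄`. -/
noncomputable def outerM {X : Type*} (𝔄 : Set (Set X)) (μ : Set X → ℝ) (E : Set X) : ℝ :=
  sInf (μ '' {A | A ∈ 𝔄 ∧ E ⊆ A})

/-- The inner measure `μ₊` induced by `μ` on `𝔄`. -/
noncomputable def innerM {X : Type*} (𝔄 : Set (Set X)) (μ : Set X → ℝ) (E : Set X) : ℝ :=
  sSup (μ '' {A | A ∈ 𝔄 ∧ A ⊆ E})

/-- The algebra of sets generated by the family `S`. -/
inductive GenAlg {X : Type*} (S : Set (Set X)) : Set X → Prop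
  | basic : ∀ A ∈ S, GenAlg S A
  | empty : GenAlg S ∅
  | compl : ∀ A, GenAlg S A → GenAlg S Aᶜ
  | union : ∀ A B, GenAlg S A → GenAlg S B → GenAlg S (A ∪ B)

section LM

variable {X : Type*} {𝔄 : Set (Set X)} {μ : Set X → ℝ}
  (h𝔄 : IsAlg 𝔄) (hμ : IsFAProb 𝔄 μ)

include h𝔄 in
lemma lm_univ_mem : (univ : Set X) ∈ 𝔄 := by
  have := h𝔄.2.1 ∅ h𝔄.1
  simpa using this

include h𝔄 in
lemma lm_inter_mem {A B : Set X} (hA : A ∈ 𝔄) (hB : B ∈ 𝔄) : A ∩ B ∈ 𝔄 := by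
  have := h𝔄.2.1 _ (h𝔄.2.2 _ (h𝔄.2.1 A hA) _ (h𝔄.2.1 B hB))
  simpa [compl_union] using this

include h𝔄 in
lemma lm_diff_mem {A B : Set X} (hA : A ∈ 𝔄) (hB : B ∈ 𝔄) : A \ B ∈ 𝔄 := by
  have := lm_inter_mem h𝔄 hA (h𝔄.2.1 B hB)
  simpa [diff_eq] using this

include h𝔄 hμ in
lemma lm_empty0 : μ ∅ = 0 := by
  have h := hμ.2.2 ∅ h𝔄.1 ∅ h𝔄.1 (by simp)
  simp at h
  linarith

include h𝔄 hμ in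
lemma lm_mono {A B : Set X} (hA : A ∈ 𝔄) (hB : B ∈ 𝔄) (hAB : A ⊆ B) : μ A ≤ μ B := by
  have hd : B \ A ∈ 𝔄 := lm_diff_mem h𝔄 hB hA
  have h := hμ.2.2 A hA (B \ A) hd disjoint_sdiff_right
  rw [union_diff_cancel hAB] at h
  have h0 := hμ.2.1 _ hd
  linarith

include h𝔄 hμ in
lemma lm_le_one {A : Set X} (hA : A ∈ 𝔄) : μ A ≤ 1 := by
  have hc := h𝔄.2.1 A hA
  have h := hμ.2.2 A hA Aᶜ hc disjoint_compl_right
  rw [union_compl_self, hμ.1] at h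
  have h0 := hμ.2.1 _ hc
  linarith

include h𝔄 hμ in
lemma lm_subadd {A B : Set X} (hA : A ∈ 𝔄) (hB : B ∈ 𝔄) : μ (A ∪ B) ≤ μ A + μ B := by
  have hd : B \ A ∈ 𝔄 := lm_diff_mem h𝔄 hB hA
  have h := hμ.2.2 A hA (B \ A) hd disjoint_sdiff_right
  rw [union_diff_self] at h
  have h2 := lm_mono h𝔄 hμ hd hB diff_subset
  linarith

include hμ in
lemma lm_outer_le {E A : Set X} (hA : A ∈ 𝔄) (hEA : E ⊆ A) : outerM 𝔄 μ E ≤ μ A := by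
  apply csInf_le
  · refine ⟨0, ?_⟩
    rintro x ⟨C, hC, rfl⟩
    exact hμ.2.1 C hC.1
  · exact ⟨A, ⟨hA, hEA⟩, rfl⟩

include h𝔄 in
lemma lm_le_outer {E : Set X} {c : ℝ} (h : ∀ A ∈ 𝔄, E ⊆ A → c ≤ μ A) :
    c ≤ outerM 𝔄 μ E := by
  refine le_csInf ⟨μ univ, ⟨univ, ⟨lm_univ_mem h𝔄, subset_univ E⟩, rfl⟩⟩ ?_
  rintro x ⟨C, hC, rfl⟩
  exact h C hC.1 hC.2

include h𝔄 hμ in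
lemma lm_le_inner {E A : Set X} (hA : A ∈ 𝔄) (hAE : A ⊆ E) : μ A ≤ innerM 𝔄 μ E := by
  apply le_csSup
  · refine ⟨1, ?_⟩
    rintro x ⟨C, hC, rfl⟩
    exact lm_le_one h𝔄 hμ hC.1
  · exact ⟨A, ⟨hA, hAE⟩, rfl⟩

include h𝔄 in
lemma lm_inner_le {E : Set X} {c : ℝ} (h : ∀ A ∈ 𝔄, A ⊆ E → μ A ≤ c) :
    innerM 𝔄 μ E ≤ c := by
  refine csSup_le ⟨μ ∅, ⟨∅, ⟨h𝔄.1, empty_subset E⟩, rfl⟩⟩ ?_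
  rintro x ⟨C, hC, rfl⟩
  exact h C hC.1 hC.2

include h𝔄 hμ in
lemma lm_sum_eq (Z : Set X) {A : Set X} (hA : A ∈ 𝔄) :
    outerM 𝔄 μ (A ∩ Z) + innerM 𝔄 μ (A ∩ Zᶜ) = μ A := by
  have h1 : innerM 𝔄 μ (A ∩ Zᶜ) ≤ μ A - outerM 𝔄 μ (A ∩ Z) := by
    apply lm_inner_le h𝔄
    intro B hB hBsub
    have hd : A \ B ∈ 𝔄 := lm_diff_mem h𝔄 hA hB
    have hsub : A ∩ Z ⊆ A \ B := by
      rintro x ⟨hxA, hxZ⟩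
      exact ⟨hxA, fun hxB => (hBsub hxB).2 hxZ⟩
    have hout := lm_outer_le hμ hd hsub
    have hBA : B ⊆ A := fun x hx => (hBsub hx).1
    have hadd := hμ.2.2 B hB (A \ B) hd disjoint_sdiff_right
    rw [union_diff_cancel hBA] at hadd
    linarith
  have h2 : μ A - innerM 𝔄 μ (A ∩ Zᶜ) ≤ outerM 𝔄 μ (A ∩ Z) := by
    apply lm_le_outer h𝔄
    intro C hC hCsub
    have hd : A \ C ∈ 𝔄 := lm_diff_mem h𝔄 hA hC
    have hsub : A \ C ⊆ A ∩ Zᶜ := by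
      rintro x ⟨hxA, hxC⟩
      exact ⟨hxA, fun hxZ => hxC (hCsub ⟨hxA, hxZ⟩)⟩
    have hin := lm_le_inner h𝔄 hμ hd hsub
    have hadd := hμ.2.2 C hC (A \ C) hd disjoint_sdiff_right
    have hAsub : A ⊆ C ∪ A \ C := fun x hx => by
      by_cases hxC : x ∈ C
      · exact Or.inl hxC
      · exact Or.inr ⟨hx, hxC⟩
    have hmono := lm_mono h𝔄 hμ hA (h𝔄.2.2 C hC _ hd) hAsub
    linarith
  linarith

include h𝔄 hμ in
lemma lm_outer_add (W : Set X) {A A' : Set X} (hA : A ∈ 𝔄) (hA' : A' ∈ 𝔄)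
    (hd : Disjoint A A') :
    outerM 𝔄 μ ((A ∪ A') ∩ W) = outerM 𝔄 μ (A ∩ W) + outerM 𝔄 μ (A' ∩ W) := by
  apply le_antisymm
  · have key : ∀ C ∈ 𝔄, A ∩ W ⊆ C → ∀ C' ∈ 𝔄, A' ∩ W ⊆ C' →
        outerM 𝔄 μ ((A ∪ A') ∩ W) ≤ μ C + μ C' := by
      intro C hC hCs C' hC' hC's
      have hsub : (A ∪ A') ∩ W ⊆ C ∪ C' := by
        rw [union_inter_distrib_right]
        exact union_subset_union hCs hC's
      calc outerM 𝔄 μ ((A ∪ A') ∩ W) ≤ μ (C ∪ C') :=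
            lm_outer_le hμ (h𝔄.2.2 _ hC _ hC') hsub
        _ ≤ μ C + μ C' := lm_subadd h𝔄 hμ hC hC'
    have step : ∀ C ∈ 𝔄, A ∩ W ⊆ C →
        outerM 𝔄 μ ((A ∪ A') ∩ W) - μ C ≤ outerM 𝔄 μ (A' ∩ W) := by
      intro C hC hCs
      apply lm_le_outer h𝔄
      intro C' hC' hC's
      have := key C hC hCs C' hC' hC's
      linarith
    have final : outerM 𝔄 μ ((A ∪ A') ∩ W) - outerM 𝔄 μ (A' ∩ W) ≤ outerM 𝔄 μ (A ∩ W) := by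
      apply lm_le_outer h𝔄
      intro C hC hCs
      have := step C hC hCs
      linarith
    linarith
  · apply lm_le_outer h𝔄
    intro C hC hCs
    have h1 : A ∩ W ⊆ C ∩ A := fun x hx => ⟨hCs ⟨Or.inl hx.1, hx.2⟩, hx.1⟩
    have h2 : A' ∩ W ⊆ C ∩ A' := fun x hx => ⟨hCs ⟨Or.inr hx.1, hx.2⟩, hx.1⟩
    have hCA : C ∩ A ∈ 𝔄 := lm_inter_mem h𝔄 hC hA
    have hCA' : C ∩ A' ∈ 𝔄 := lm_inter_mem h𝔄 hC hA'
    have o1 := lm_outer_le hμ hCA h1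
    have o2 := lm_outer_le hμ hCA' h2
    have hdisj : Disjoint (C ∩ A) (C ∩ A') := hd.mono inter_subset_right inter_subset_right
    have hadd := hμ.2.2 _ hCA _ hCA' hdisj
    have hsub : (C ∩ A) ∪ (C ∩ A') ⊆ C := union_subset inter_subset_left inter_subset_left
    have hmono := lm_mono h𝔄 hμ (h𝔄.2.2 _ hCA _ hCA') hC hsub
    linarith

include h𝔄 hμ in
lemma lm_inner_add (W : Set X) {B B' : Set X} (hB : B ∈ 𝔄) (hB' : B' ∈ 𝔄)
    (hd : Disjoint B B') :
    innerM 𝔄 μ ((B ∪ B') ∩ W) = innerM 𝔄 μ (B ∩ W) + innerM 𝔄 μ (B' ∩ W) := by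
  apply le_antisymm
  · apply lm_inner_le h𝔄
    intro D hD hDs
    have h1 : D ∩ B ⊆ B ∩ W := fun x hx => ⟨hx.2, (hDs hx.1).2⟩
    have h2 : D ∩ B' ⊆ B' ∩ W := fun x hx => ⟨hx.2, (hDs hx.1).2⟩
    have hDB : D ∩ B ∈ 𝔄 := lm_inter_mem h𝔄 hD hB
    have hDB' : D ∩ B' ∈ 𝔄 := lm_inter_mem h𝔄 hD hB'
    have i1 := lm_le_inner h𝔄 hμ hDB h1
    have i2 := lm_le_inner h𝔄 hμ hDB' h2
    have hDeq : (D ∩ B) ∪ (D ∩ B') = D := by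
      rw [← inter_union_distrib_left]
      exact inter_eq_left.mpr (fun x hx => (hDs hx).1)
    have hdisj : Disjoint (D ∩ B) (D ∩ B') := hd.mono inter_subset_right inter_subset_right
    have hadd := hμ.2.2 _ hDB _ hDB' hdisj
    rw [hDeq] at hadd
    linarith
  · have key : ∀ D ∈ 𝔄, D ⊆ B ∩ W → ∀ D' ∈ 𝔄, D' ⊆ B' ∩ W →
        μ D + μ D' ≤ innerM 𝔄 μ ((B ∪ B') ∩ W) := by
      intro D hD hDs D' hD' hD's
      have hdisj : Disjoint D D' :=
        hd.mono (hDs.trans inter_subset_left) (hD's.trans inter_subset_left)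
      have hadd := hμ.2.2 D hD D' hD' hdisj
      have hsub : D ∪ D' ⊆ (B ∪ B') ∩ W := by
        rw [union_inter_distrib_right]
        exact union_subset_union hDs hD's
      have := lm_le_inner h𝔄 hμ (h𝔄.2.2 _ hD _ hD') hsub
      linarith
    have step : ∀ D ∈ 𝔄, D ⊆ B ∩ W →
        μ D + innerM 𝔄 μ (B' ∩ W) ≤ innerM 𝔄 μ ((B ∪ B') ∩ W) := by
      intro D hD hDs
      have : innerM 𝔄 μ (B' ∩ W) ≤ innerM 𝔄 μ ((B ∪ B') ∩ W) - μ D := by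
        apply lm_inner_le h𝔄
        intro D' hD' hD's
        have := key D hD hDs D' hD' hD's
        linarith
      linarith
    have final : innerM 𝔄 μ (B ∩ W) ≤
        innerM 𝔄 μ ((B ∪ B') ∩ W) - innerM 𝔄 μ (B' ∩ W) := by
      apply lm_inner_le h𝔄
      intro D hD hDs
      have := step D hD hDs
      linarith
    linarith

include h𝔄 hμ in
lemma lm_outer_add' (W : Set X) {A A' : Set X} (hA : A ∈ 𝔄) (hA' : A' ∈ 𝔄)
    (hd : Disjoint (A ∩ W) (A' ∩ W)) :
    outerM 𝔄 μ ((A ∪ A') ∩ W) = outerM 𝔄 μ (A ∩ W) + outerM 𝔄 μ (A' ∩ W) := by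
  have h1 : (A' \ A) ∩ W = A' ∩ W := by
    ext x
    constructor
    · rintro ⟨⟨hx1, _⟩, hx3⟩
      exact ⟨hx1, hx3⟩
    · rintro ⟨hx1, hx2⟩
      refine ⟨⟨hx1, fun hxA => ?_⟩, hx2⟩
      exact Set.disjoint_left.mp hd ⟨hxA, hx2⟩ ⟨hx1, hx2⟩
  have h2 : (A ∪ A' \ A) ∩ W = (A ∪ A') ∩ W := by rw [union_diff_self]
  have h := lm_outer_add h𝔄 hμ W hA (lm_diff_mem h𝔄 hA' hA) disjoint_sdiff_right
  rw [h2, h1] at h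
  exact h

include h𝔄 hμ in
lemma lm_inner_add' (W : Set X) {B B' : Set X} (hB : B ∈ 𝔄) (hB' : B' ∈ 𝔄)
    (hd : Disjoint (B ∩ W) (B' ∩ W)) :
    innerM 𝔄 μ ((B ∪ B') ∩ W) = innerM 𝔄 μ (B ∩ W) + innerM 𝔄 μ (B' ∩ W) := by
  have h1 : (B' \ B) ∩ W = B' ∩ W := by
    ext x
    constructor
    · rintro ⟨⟨hx1, _⟩, hx3⟩
      exact ⟨hx1, hx3⟩
    · rintro ⟨hx1, hx2⟩
      refine ⟨⟨hx1, fun hxB => ?_⟩, hx2⟩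
      exact Set.disjoint_left.mp hd ⟨hxB, hx2⟩ ⟨hx1, hx2⟩
  have h2 : (B ∪ B' \ B) ∩ W = (B ∪ B') ∩ W := by rw [union_diff_self]
  have h := lm_inner_add h𝔄 hμ W hB (lm_diff_mem h𝔄 hB' hB) disjoint_sdiff_right
  rw [h2, h1] at h
  exact h

end LM

/-- (Łoś–Marczewski) The formula
`μ̄((A ∩ Z) ∪ (B ∩ Zᶜ)) = μ*(A ∩ Z) + μ₊(B ∩ Zᶜ)` gives a well-defined finitely
additive probability measure on `𝔄(Z)` extending `μ`. -/
theorem stmt_2 {X : Type*} (𝔄 : Set (Set X)) (h𝔄 : IsAlg 𝔄)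
    (μ : Set X → ℝ) (hμ : IsFAProb 𝔄 μ) (Z : Set X) :
    ∃ ν : Set X → ℝ,
      (∀ A ∈ 𝔄, ν A = μ A) ∧
      IsFAProb {C | GenAlg (𝔄 ∪ {Z}) C} ν ∧
      ∀ A ∈ 𝔄, ∀ B ∈ 𝔄,
        ν ((A ∩ Z) ∪ (B ∩ Zᶜ)) = outerM 𝔄 μ (A ∩ Z) + innerM 𝔄 μ (B ∩ Zᶜ) := by
  have struct : ∀ E : Set X, GenAlg (𝔄 ∪ {Z}) E →
      ∃ A B, A ∈ 𝔄 ∧ B ∈ 𝔄 ∧ E = (A ∩ Z) ∪ (B ∩ Zᶜ) := by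
    intro E hE
    induction hE with
    | basic A hA =>
      rcases hA with hA | hA
      · exact ⟨A, A, hA, hA,
          by rw [← inter_union_distrib_left, union_compl_self, inter_univ]⟩
      · simp only [mem_singleton_iff] at hA
        subst hA
        exact ⟨univ, ∅, lm_univ_mem h𝔄, h𝔄.1, by simp⟩
    | empty => exact ⟨∅, ∅, h𝔄.1, h𝔄.1, by simp⟩
    | compl A _ ih =>
      obtain ⟨A', B', hA', hB', rfl⟩ := ih
      refine ⟨A'ᶜ, B'ᶜ, h𝔄.2.1 _ hA', h𝔄.2.1 _ hB', ?_⟩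
      ext x
      by_cases hx : x ∈ Z <;> simp [hx]
    | union A B _ _ ihA ihB =>
      obtain ⟨A1, B1, hA1, hB1, rfl⟩ := ihA
      obtain ⟨A2, B2, hA2, hB2, rfl⟩ := ihB
      refine ⟨A1 ∪ A2, B1 ∪ B2, h𝔄.2.2 _ hA1 _ hA2, h𝔄.2.2 _ hB1 _ hB2, ?_⟩
      ext x
      by_cases hx : x ∈ Z <;> simp [hx]
  have trZ : ∀ A B : Set X, ((A ∩ Z) ∪ (B ∩ Zᶜ)) ∩ Z = A ∩ Z := by
    intro A B
    ext x
    by_cases hx : x ∈ Z <;> simp [hx]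
  have trZc : ∀ A B : Set X, ((A ∩ Z) ∪ (B ∩ Zᶜ)) ∩ Zᶜ = B ∩ Zᶜ := by
    intro A B
    ext x
    by_cases hx : x ∈ Z <;> simp [hx]
  refine ⟨fun E => outerM 𝔄 μ (E ∩ Z) + innerM 𝔄 μ (E ∩ Zᶜ), ?_, ⟨?_, ?_, ?_⟩, ?_⟩
  · intro A hA
    exact lm_sum_eq h𝔄 hμ Z hA
  · show outerM 𝔄 μ (univ ∩ Z) + innerM 𝔄 μ (univ ∩ Zᶜ) = 1
    rw [lm_sum_eq h𝔄 hμ Z (lm_univ_mem h𝔄), hμ.1]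
  · intro E _
    have h1 : 0 ≤ outerM 𝔄 μ (E ∩ Z) := lm_le_outer h𝔄 (fun A hA _ => hμ.2.1 A hA)
    have h2 : (0 : ℝ) ≤ innerM 𝔄 μ (E ∩ Zᶜ) := by
      have h := lm_le_inner (E := E ∩ Zᶜ) h𝔄 hμ h𝔄.1 (empty_subset _)
      rw [lm_empty0 h𝔄 hμ] at h
      exact h
    exact add_nonneg h1 h2
  · intro E hE F hF hEF
    obtain ⟨A, B, hA, hB, rfl⟩ := struct E hE
    obtain ⟨A', B', hA', hB', rfl⟩ := struct F hF
    have hU : (((A ∩ Z) ∪ (B ∩ Zᶜ)) ∪ ((A' ∩ Z) ∪ (B' ∩ Zᶜ))) =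
        ((A ∪ A') ∩ Z) ∪ ((B ∪ B') ∩ Zᶜ) := by
      ext x
      by_cases hx : x ∈ Z <;> simp [hx]
    show outerM 𝔄 μ _ + innerM 𝔄 μ _ = _
    beta_reduce
    rw [hU, trZ, trZc, trZ, trZc, trZ, trZc]
    have hdZ : Disjoint (A ∩ Z) (A' ∩ Z) := hEF.mono subset_union_left subset_union_left
    have hdZc : Disjoint (B ∩ Zᶜ) (B' ∩ Zᶜ) :=
      hEF.mono subset_union_right subset_union_right
    rw [lm_outer_add' h𝔄 hμ Z hA hA' hdZ, lm_inner_add' h𝔄 hμ Zᶜ hB hB' hdZc]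
    ring
  · intro A hA B hB
    show outerM 𝔄 μ (((A ∩ Z) ∪ (B ∩ Zᶜ)) ∩ Z) + innerM 𝔄 μ (((A ∩ Z) ∪ (B ∩ Zᶜ)) ∩ Zᶜ) = _
    rw [trZ, trZc]
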